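/- Let J be a real symmetric N×N matrix with vanishing diagonal, κ ∈ ℝ^N, and let J(κ) = J + diag(κ). Suppose J(κ) is positive semidefinite and s is a real N×M matrix whose rows are unit vectors with J(κ)·s = 0. Then s is a ground state of the Heisenberg Hamiltonian defined by J: for every real N×M' matrix t whose rows are unit vectors, Tr(J·t·tᵀ) ≥ Tr(J·s·sᵀ). -/

import Mathlib

open Matrix

/-- A spin configuration: an `N × M` real matrix whose rows are unit vectors. -/
def IsSpinConfig {N M : ℕ} (s : Matrix (Fin N) (Fin M) ℝ) : Prop :=
  ∀ μ, ∑ i, s μ i * s μ i = 1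

lemma trace_psd_nonneg {n : Type*} [Fintype n] [DecidableEq n] {A : Matrix n n ℝ} (hA : A.PosSemidef) :
    0 ≤ A.trace := by
  apply Finset.sum_nonneg
  intro i _
  have h := hA.2 (Finsupp.single i 1)
  simpa [dotProduct, Matrix.mulVec, Pi.single_apply, Finset.sum_ite_eq,
    Finset.mul_sum] using h

lemma trace_diag_spin {N M : ℕ} (κ : Fin N → ℝ) (t : Matrix (Fin N) (Fin M) ℝ)
    (ht : IsSpinConfig t) : (Matrix.diagonal κ * (t * tᵀ)).trace = ∑ μ, κ μ := by
  simp only [Matrix.trace, Matrix.diag, Matrix.mul_apply, Matrix.diagonal_apply,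
    Matrix.transpose_apply]
  refine Finset.sum_congr rfl fun μ _ => ?_
  rw [Finset.sum_eq_single μ]
  · simp [ht μ, Finset.mul_sum]
  · intro b _ hb; simp [Ne.symm hb]
  · simp

theorem psd_dressed_annihilates_imp_groundState {N M : ℕ}
    (J : Matrix (Fin N) (Fin N) ℝ) (hsym : J.IsSymm) (hdiag : ∀ i, J i i = 0)
    (κ : Fin N → ℝ)
    (hpsd : (J + Matrix.diagonal κ).PosSemidef)
    (s : Matrix (Fin N) (Fin M) ℝ) (hs : IsSpinConfig s)
    (hker : (J + Matrix.diagonal κ) * s = 0) :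
    ∀ (M' : ℕ) (t : Matrix (Fin N) (Fin M') ℝ), IsSpinConfig t →
      (J * (t * tᵀ)).trace ≥ (J * (s * sᵀ)).trace := by
  intro M' t ht
  set A := J + Matrix.diagonal κ with hA
  have key : ∀ (K : ℕ) (u : Matrix (Fin N) (Fin K) ℝ), IsSpinConfig u →
      (J * (u * uᵀ)).trace = (A * (u * uᵀ)).trace - ∑ μ, κ μ := by
    intro K u hu
    rw [hA, Matrix.add_mul, Matrix.trace_add, trace_diag_spin κ u hu]
    ring
  rw [key M s hs, key M' t ht]
  have hAs : (A * (s * sᵀ)).trace = 0 := by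
    rw [← Matrix.mul_assoc, hker, Matrix.zero_mul, Matrix.trace_zero]
  rw [hAs]
  have hpsd' : (tᵀ * A * t).PosSemidef := hpsd.conjTranspose_mul_mul_same t
  have : (A * (t * tᵀ)).trace = (tᵀ * A * t).trace := by
    rw [← Matrix.mul_assoc, Matrix.trace_mul_comm (A * t) tᵀ, ← Matrix.mul_assoc]
  linarith [trace_psd_nonneg hpsd']
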